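/- Let G be a regular graph with n vertices and m edges. Then E(G) = QE(G) ≤ 2m/n + √((n−1)·(2m − (2m/n)²)). -/

import Mathlib

open Finset Matrix BigOperators

/-- The signless Laplacian matrix `Q(G) = D(G) + A(G)` of a simple graph, over `ℝ`. -/
noncomputable def signlessLaplacian {V : Type*} [Fintype V] [DecidableEq V]
    (G : SimpleGraph V) [DecidableRel G.Adj] : Matrix V V ℝ :=
  Matrix.diagonal (fun v => (G.degree v : ℝ)) + G.adjMatrix ℝ

lemma signlessLaplacian_isHermitian {V : Type*} [Fintype V] [DecidableEq V]
    (G : SimpleGraph V) [DecidableRel G.Adj] : (signlessLaplacian G).IsHermitian := by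
  unfold signlessLaplacian
  apply Matrix.IsHermitian.add
  · exact Matrix.isHermitian_diagonal _
  · rw [Matrix.IsHermitian, conjTranspose_eq_transpose_of_trivial]
    exact G.isSymm_adjMatrix

/-- The signless Laplacian eigenvalues of `G` (as a function on the vertex index type). -/
noncomputable def qEig {V : Type*} [Fintype V] [DecidableEq V]
    (G : SimpleGraph V) [DecidableRel G.Adj] : V → ℝ :=
  (signlessLaplacian_isHermitian G).eigenvalues

/-- The number of edges of `G`, as a real number. -/
noncomputable def mE {V : Type*} [Fintype V] [DecidableEq V]
    (G : SimpleGraph V) [DecidableRel G.Adj] : ℝ :=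
  G.edgeFinset.card

/-- The first Zagreb index `M₁(G) = Σ d(v)²`, as a real number. -/
noncomputable def M1 {V : Type*} [Fintype V] [DecidableEq V]
    (G : SimpleGraph V) [DecidableRel G.Adj] : ℝ :=
  ∑ v, (G.degree v : ℝ) ^ 2

/-- The signless Laplacian energy `QE(G) = Σ |qᵢ - 2m/n|`. -/
noncomputable def QE {V : Type*} [Fintype V] [DecidableEq V]
    (G : SimpleGraph V) [DecidableRel G.Adj] : ℝ :=
  ∑ i, |qEig G i - 2 * mE G / (Fintype.card V : ℝ)|

lemma adj_isHermitian {V : Type*} [Fintype V] [DecidableEq V]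
    (G : SimpleGraph V) [DecidableRel G.Adj] : (G.adjMatrix ℝ).IsHermitian := by
  rw [Matrix.IsHermitian, conjTranspose_eq_transpose_of_trivial]
  exact G.isSymm_adjMatrix

/-- The adjacency eigenvalues of `G`. -/
noncomputable def aEig {V : Type*} [Fintype V] [DecidableEq V]
    (G : SimpleGraph V) [DecidableRel G.Adj] : V → ℝ :=
  (adj_isHermitian G).eigenvalues

/-- The (adjacency) graph energy `E(G) = Σ |λᵢ|`. -/
noncomputable def AE {V : Type*} [Fintype V] [DecidableEq V]
    (G : SimpleGraph V) [DecidableRel G.Adj] : ℝ :=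
  ∑ i, |aEig G i|


section Aux

open Polynomial

lemma det_conj_diag {N : ℕ} (U : Matrix.unitaryGroup (Fin N) ℝ) (d : Fin N → ℝ) (t : ℝ) :
    ((U : Matrix (Fin N) (Fin N) ℝ) * Matrix.diagonal d * star (U : Matrix (Fin N) (Fin N) ℝ)
      - t • 1).det = ∏ i, (d i - t) := by
  have h1 : (U : Matrix (Fin N) (Fin N) ℝ) * Matrix.diagonal d * star (U : Matrix (Fin N) (Fin N) ℝ) - t • 1
      = (U : Matrix (Fin N) (Fin N) ℝ) * (Matrix.diagonal d - t • 1) * star (U : Matrix (Fin N) (Fin N) ℝ) := by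
    rw [Matrix.mul_sub, Matrix.sub_mul]
    congr 1
    rw [Matrix.mul_smul, Matrix.mul_one, Matrix.smul_mul, (Matrix.mem_unitaryGroup_iff).mp U.2]
  rw [h1, Matrix.det_mul, Matrix.det_mul, mul_comm, ← mul_assoc, ← Matrix.det_mul,
    (Matrix.mem_unitaryGroup_iff').mp U.2, Matrix.det_one, one_mul]
  have : Matrix.diagonal d - t • (1 : Matrix (Fin N) (Fin N) ℝ) = Matrix.diagonal (fun i => d i - t) := by
    rw [Matrix.smul_one_eq_diagonal, Matrix.diagonal_sub]
  rw [this, Matrix.det_diagonal]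

lemma ofReal_comp_eq {N : ℕ} (f : Fin N → ℝ) : (RCLike.ofReal ∘ f : Fin N → ℝ) = f := by
  funext i; simp [RCLike.ofReal]

lemma eig_multiset_of_conj {N : ℕ} {M : Matrix (Fin N) (Fin N) ℝ} (hM : M.IsHermitian)
    (U : Matrix.unitaryGroup (Fin N) ℝ) (d : Fin N → ℝ)
    (h : M = (U : Matrix (Fin N) (Fin N) ℝ) * Matrix.diagonal d * star (U : Matrix (Fin N) (Fin N) ℝ)) :
    Multiset.map hM.eigenvalues Finset.univ.val = Multiset.map d Finset.univ.val := by
  have key : ∀ t : ℝ, ∏ i, (hM.eigenvalues i - t) = ∏ i, (d i - t) := by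
    intro t
    have h2 := hM.spectral_theorem
    rw [ofReal_comp_eq] at h2
    simp only [Unitary.conjStarAlgAut_apply, Unitary.coe_star] at h2
    rw [← det_conj_diag hM.eigenvectorUnitary hM.eigenvalues t, ← h2, h, det_conj_diag]
  have hpoly : ∏ i : Fin N, (X - C (hM.eigenvalues i)) = ∏ i : Fin N, (X - C (d i)) := by
    apply Polynomial.funext
    intro t
    have flip : ∀ f : Fin N → ℝ, ∏ i, (t - f i) = (-1)^N * ∏ i, (f i - t) := by
      intro f
      rw [show ((-1:ℝ))^N = ∏ _i : Fin N, (-1:ℝ) by simp, ← Finset.prod_mul_distrib]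
      simp [neg_one_mul]
    simp only [eval_prod, eval_sub, eval_X, eval_C]
    rw [flip, flip, key t]
  have h1 : (Multiset.map (fun a => X - C a) (Multiset.map hM.eigenvalues Finset.univ.val)).prod
      = ∏ i : Fin N, (X - C (hM.eigenvalues i)) := by
    rw [Multiset.map_map]; rfl
  have h2 : (Multiset.map (fun a => X - C a) (Multiset.map d Finset.univ.val)).prod
      = ∏ i : Fin N, (X - C (d i)) := by
    rw [Multiset.map_map]; rfl
  rw [← Polynomial.roots_multiset_prod_X_sub_C (Multiset.map hM.eigenvalues Finset.univ.val),
    ← Polynomial.roots_multiset_prod_X_sub_C (Multiset.map d Finset.univ.val), h1, h2, hpoly]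

lemma sum_eig_sq {N : ℕ} {M : Matrix (Fin N) (Fin N) ℝ} (hM : M.IsHermitian) :
    ∑ i, hM.eigenvalues i ^ 2 = Matrix.trace (M * M) := by
  have h2 := hM.spectral_theorem
  rw [ofReal_comp_eq] at h2
  simp only [Unitary.conjStarAlgAut_apply, Unitary.coe_star] at h2
  set U := (hM.eigenvectorUnitary : Matrix (Fin N) (Fin N) ℝ)
  have hU : star U * U = 1 := (Matrix.mem_unitaryGroup_iff').mp hM.eigenvectorUnitary.2
  calc ∑ i, hM.eigenvalues i ^ 2
      = Matrix.trace (Matrix.diagonal hM.eigenvalues * Matrix.diagonal hM.eigenvalues) := by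
        rw [Matrix.diagonal_mul_diagonal, Matrix.trace_diagonal]; simp [sq]
    _ = Matrix.trace (M * M) := by
        conv_rhs => rw [h2]
        rw [show U * Matrix.diagonal hM.eigenvalues * star U * (U * Matrix.diagonal hM.eigenvalues * star U)
          = U * (Matrix.diagonal hM.eigenvalues * (star U * U) * Matrix.diagonal hM.eigenvalues) * star U by
            noncomm_ring]
        rw [hU, Matrix.mul_one, Matrix.trace_mul_cycle, ← Matrix.mul_assoc, hU, Matrix.one_mul]

lemma trace_adj_sq {N : ℕ} (G : SimpleGraph (Fin N)) [DecidableRel G.Adj] :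
    Matrix.trace (G.adjMatrix ℝ * G.adjMatrix ℝ) = ∑ v, (G.degree v : ℝ) := by
  rw [Matrix.trace]
  refine Finset.sum_congr rfl fun v _ => ?_
  rw [Matrix.diag_apply, Matrix.mul_apply]
  rw [SimpleGraph.degree, SimpleGraph.neighborFinset_eq_filter, ← Finset.sum_boole]
  refine Finset.sum_congr rfl fun w _ => ?_
  by_cases h : G.Adj v w <;> simp [h, G.adj_symm, SimpleGraph.adjMatrix_apply]

end Aux

/-- For a regular graph `G` with `n` vertices and `m` edges,
`E(G) = QE(G) ≤ 2m/n + √((n-1)(2m - (2m/n)²))`. -/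
theorem regular_QE_upper_bound {n : ℕ} (G : SimpleGraph (Fin n)) [DecidableRel G.Adj]
    (r : ℕ) (hreg : G.IsRegularOfDegree r) :
    AE G = QE G
    ∧ QE G ≤ 2 * mE G / (n : ℝ)
        + Real.sqrt (((n : ℝ) - 1) * (2 * mE G - (2 * mE G / (n : ℝ)) ^ 2)) := by
  classical
  have hA := adj_isHermitian G
  have hQ := signlessLaplacian_isHermitian G
  -- handshake
  have hhand : (2 : ℝ) * mE G = (n : ℝ) * r := by
    have h1 : ∑ v, G.degree v = 2 * G.edgeFinset.card := G.sum_degrees_eq_twice_card_edges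
    have h2 : ∑ v : Fin n, G.degree v = n * r := by
      simp [hreg _, Finset.sum_const, mul_comm]
    rw [h2] at h1
    have := congrArg (fun k : ℕ => (k : ℝ)) h1.symm
    push_cast at this
    simpa [mE] using this
  rcases Nat.eq_zero_or_pos n with hn | hn
  · subst hn
    have hm0 : mE G = 0 := by
      have := hhand; simp at this; linarith
    constructor
    · simp [AE, QE]
    · have h0 : QE G = 0 := by simp [QE]
      rw [h0, hm0]
      positivity
  -- n > 0
  have hn' : (n : ℝ) ≠ 0 := by positivity
  have hr : 2 * mE G / (n : ℝ) = r := by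
    rw [hhand, mul_comm, mul_div_assoc, div_self hn', mul_one]
  set U := hA.eigenvectorUnitary with hUdef
  have hAdec : G.adjMatrix ℝ
      = (U : Matrix (Fin n) (Fin n) ℝ) * Matrix.diagonal (aEig G) * star (U : Matrix (Fin n) (Fin n) ℝ) := by
    have := hA.spectral_theorem
    rwa [ofReal_comp_eq] at this
  have hUU : (U : Matrix (Fin n) (Fin n) ℝ) * star (U : Matrix (Fin n) (Fin n) ℝ) = 1 :=
    (Matrix.mem_unitaryGroup_iff).mp U.2
  have hQdec : signlessLaplacian G
      = (U : Matrix (Fin n) (Fin n) ℝ) * Matrix.diagonal (fun i => aEig G i + r) * star (U : Matrix (Fin n) (Fin n) ℝ) := by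
    have hdeg : Matrix.diagonal (fun v : Fin n => (G.degree v : ℝ)) = (r : ℝ) • 1 := by
      have hfun : (fun v : Fin n => (G.degree v : ℝ)) = fun _ => (r : ℝ) := by
        funext v; rw [hreg v]
      rw [hfun, Matrix.smul_one_eq_diagonal]
    have : Matrix.diagonal (fun i => aEig G i + (r:ℝ))
        = Matrix.diagonal (aEig G) + (r : ℝ) • 1 := by
      rw [Matrix.smul_one_eq_diagonal, Matrix.diagonal_add]
    rw [this, Matrix.mul_add, Matrix.add_mul, ← hAdec, Matrix.mul_smul, Matrix.mul_one,
      Matrix.smul_mul, hUU, signlessLaplacian, hdeg, add_comm]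
  have hmul : Multiset.map (qEig G) Finset.univ.val
      = Multiset.map (fun i => aEig G i + r) Finset.univ.val :=
    eig_multiset_of_conj hQ U _ hQdec
  -- AE = QE
  have hAEQE : AE G = QE G := by
    unfold QE AE
    simp only [Fintype.card_fin]
    rw [hr]
    conv_lhs => rw [show (∑ i, |aEig G i|) = ∑ i, |aEig G i + r - r| by
      refine Finset.sum_congr rfl fun i _ => ?_; ring_nf]
    have e1 : ∑ i, |qEig G i - (r:ℝ)|
        = (Multiset.map (fun x => |x - (r:ℝ)|) (Multiset.map (qEig G) Finset.univ.val)).sum := by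
      rw [Multiset.map_map]; rfl
    have e2 : ∑ i, |aEig G i + r - (r:ℝ)|
        = (Multiset.map (fun x => |x - (r:ℝ)|) (Multiset.map (fun i => aEig G i + r) Finset.univ.val)).sum := by
      rw [Multiset.map_map]; rfl
    rw [e1, e2, hmul]
  refine ⟨hAEQE, ?_⟩
  rw [← hAEQE, hr]
  -- sum of squares of adjacency eigenvalues
  have hsq : ∑ i, aEig G i ^ 2 = 2 * mE G := by
    rw [aEig] at *
    rw [sum_eig_sq hA, trace_adj_sq]
    have h1 : ∑ v, G.degree v = 2 * G.edgeFinset.card := G.sum_degrees_eq_twice_card_edges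
    have := congrArg (fun k : ℕ => (k : ℝ)) h1
    push_cast at this
    simpa [mE] using this
  -- r is an eigenvalue
  have hex : ∃ i, aEig G i = (r : ℝ) := by
    have hdet : ((G.adjMatrix ℝ) - (r:ℝ) • 1).det = 0 := by
      rw [← Matrix.exists_mulVec_eq_zero_iff]
      refine ⟨Function.const (Fin n) (1:ℝ), ?_, ?_⟩
      · intro h
        have := congrFun h ⟨0, hn⟩
        simp [Function.const] at this
      · funext v
        simp [Matrix.sub_mulVec, SimpleGraph.adjMatrix_mulVec_const_apply, hreg v,
          Matrix.smul_mulVec]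
    rw [hAdec, det_conj_diag] at hdet
    obtain ⟨i, _, hi⟩ := Finset.prod_eq_zero_iff.mp hdet
    exact ⟨i, by linarith [sub_eq_zero.mp hi]⟩
  obtain ⟨i₀, hi₀⟩ := hex
  have habs : |aEig G i₀| = (r : ℝ) := by rw [hi₀]; exact abs_of_nonneg (by positivity)
  have hsplit : AE G = (r : ℝ) + ∑ i ∈ Finset.univ.erase i₀, |aEig G i| := by
    rw [AE, ← Finset.add_sum_erase _ _ (Finset.mem_univ i₀), habs]
  have hsqsplit : ∑ i ∈ Finset.univ.erase i₀, aEig G i ^ 2 = 2 * mE G - (r:ℝ)^2 := by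
    have h := Finset.add_sum_erase Finset.univ (fun i => aEig G i ^ 2) (Finset.mem_univ i₀)
    simp only [hi₀] at h
    linarith [hsq, h]
  have hcard : ((Finset.univ.erase i₀).card : ℝ) = (n : ℝ) - 1 := by
    rw [Finset.card_erase_of_mem (Finset.mem_univ i₀)]
    have : (Finset.univ : Finset (Fin n)).card = n := by simp
    rw [this, Nat.cast_sub hn]; simp
  set T := ∑ i ∈ Finset.univ.erase i₀, |aEig G i| with hT
  have hTnn : 0 ≤ T := Finset.sum_nonneg fun i _ => abs_nonneg _
  have hCS : T ^ 2 ≤ ((n:ℝ) - 1) * (2 * mE G - (r:ℝ)^2) := by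
    calc T ^ 2 ≤ ((Finset.univ.erase i₀).card : ℝ) * ∑ i ∈ Finset.univ.erase i₀, |aEig G i| ^ 2 := by
          rw [hT]
          exact_mod_cast sq_sum_le_card_mul_sum_sq (s := Finset.univ.erase i₀)
            (f := fun i => |aEig G i|)
      _ = ((n:ℝ) - 1) * (2 * mE G - (r:ℝ)^2) := by
          rw [hcard, ← hsqsplit]
          congr 1
          exact Finset.sum_congr rfl fun i _ => sq_abs _
  have hTle : T ≤ Real.sqrt (((n:ℝ) - 1) * (2 * mE G - (r:ℝ)^2)) := by
    have := Real.sqrt_le_sqrt hCS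
    rwa [Real.sqrt_sq hTnn] at this
  rw [hsplit]
  linarith
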